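/- A graded poset P is k-Eulerian if and only if D^ℓ P is kℓ-Eulerian. -/

import Mathlib

open scoped Classical

attribute [local instance] Fintype.ofFinite

/-- A rank function making a bounded poset graded of rank `n+1`. -/
def IsGraded (P : Type) [PartialOrder P] [BoundedOrder P] (ρ : P → ℕ) (n : ℕ) : Prop :=
  ρ ⊥ = 0 ∧ ρ ⊤ = n + 1 ∧ ∀ x y : P, x ⋖ y → ρ y = ρ x + 1

/-- A poset is `r`-thick if every nonempty open interval has at least `r` elements. -/
def RThick (P : Type) [PartialOrder P] [Fintype P] (r : ℕ) : Prop :=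
  ∀ x y : P, x < y → (∃ z, x < z ∧ z < y) →
    r ≤ (Finset.univ.filter fun z => x < z ∧ z < y).card

/-- The flag number `f_S(P)`: the number of chains of `P` whose set of ranks is `S`. -/
noncomputable def flagNum {P : Type} [PartialOrder P] [Fintype P] (ρ : P → ℕ)
    (S : Finset ℕ) : ℕ :=
  (Finset.univ.filter fun c : Finset P =>
    IsChain (· ≤ ·) (c : Set P) ∧ c.image ρ = S ∧ c.card = S.card).card

/-- The flag number `f_S([x,y])` of the interval `[x,y]`, with ranks relative to `x`. -/
noncomputable def flagNumI {P : Type} [PartialOrder P] [Fintype P] (ρ : P → ℕ)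
    (x y : P) (S : Finset ℕ) : ℕ :=
  (Finset.univ.filter fun c : Finset P =>
    IsChain (· ≤ ·) (c : Set P) ∧ (∀ z ∈ c, x < z ∧ z < y) ∧
      c.image (fun z => ρ z - ρ x) = S ∧ c.card = S.card).card

/-- The `k`-Möbius function `μ_k([x,y])`. -/
noncomputable def muk {P : Type} [PartialOrder P] [Fintype P] (k : ℝ) (x : P) (y : P) : ℝ :=
  if x = y then 1
  else -1 - (1/k) * ∑ z ∈ (Finset.univ.filter fun z => x < z ∧ z < y).attach,
    muk k x z.val
termination_by (Finset.univ.filter fun w => w < y).card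
decreasing_by
  have hz : (z : P) < y := (Finset.mem_filter.mp z.2).2.2
  apply Finset.card_lt_card
  rw [Finset.ssubset_iff_of_subset]
  · exact ⟨z, Finset.mem_filter.mpr ⟨Finset.mem_univ _, hz⟩,
      fun hc => absurd (Finset.mem_filter.mp hc).2 (lt_irrefl _)⟩
  · intro w hw
    exact Finset.mem_filter.mpr ⟨Finset.mem_univ _, (Finset.mem_filter.mp hw).2.trans hz⟩

/-- The ordinary Möbius function of a finite poset. -/
noncomputable def mobius {P : Type} [PartialOrder P] [Fintype P] (x : P) (y : P) : ℤ :=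
  if x = y then 1
  else -∑ z ∈ (Finset.univ.filter fun z => x ≤ z ∧ z < y).attach, mobius x z.val
termination_by (Finset.univ.filter fun w => w < y).card
decreasing_by
  have hz : (z : P) < y := (Finset.mem_filter.mp z.2).2.2
  apply Finset.card_lt_card
  rw [Finset.ssubset_iff_of_subset]
  · exact ⟨z, Finset.mem_filter.mpr ⟨Finset.mem_univ _, hz⟩,
      fun hc => absurd (Finset.mem_filter.mp hc).2 (lt_irrefl _)⟩
  · intro w hw
    exact Finset.mem_filter.mpr ⟨Finset.mem_univ _, (Finset.mem_filter.mp hw).2.trans hz⟩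

/-- A graded poset is `k`-Eulerian when `μ_k([x,y]) = (-1)^{ρ(y)-ρ(x)}` on every interval. -/
def IsKEulerian (P : Type) [PartialOrder P] [Fintype P] (ρ : P → ℕ) (k : ℝ) : Prop :=
  ∀ x y : P, x ≤ y → muk k x y = (-1 : ℝ) ^ (ρ y - ρ x)

/-- The flag `L^k` vector of a poset of rank `n+1`. -/
noncomputable def Lk {P : Type} [PartialOrder P] [Fintype P] (k : ℝ) (n : ℕ) (ρ : P → ℕ)
    (S : Finset ℕ) : ℝ :=
  (-1 : ℝ) ^ (n - S.card) *
    ∑ T ∈ (Finset.Icc 1 n).powerset.filter (fun T => Finset.Icc 1 n \ S ⊆ T),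
      (-(1/(2*k))) ^ T.card * (flagNum ρ T : ℝ)

/-- The flag `L^k` vector of an interval `[x,y]` of rank `n+1`. -/
noncomputable def LkI {P : Type} [PartialOrder P] [Fintype P] (k : ℝ) (n : ℕ) (ρ : P → ℕ)
    (x y : P) (S : Finset ℕ) : ℝ :=
  (-1 : ℝ) ^ (n - S.card) *
    ∑ T ∈ (Finset.Icc 1 n).powerset.filter (fun T => Finset.Icc 1 n \ S ⊆ T),
      (-(1/(2*k))) ^ T.card * (flagNumI ρ x y T : ℝ)

/-- A set is even if it is a disjoint union of intervals of even cardinality. -/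
def IsEvenSet (S : Finset ℕ) : Prop :=
  ∃ J : Finset (ℕ × ℕ),
    S = J.biUnion (fun p => Finset.Icc p.1 p.2) ∧
    (∀ p ∈ J, p.1 ≤ p.2 ∧ Even (p.2 + 1 - p.1)) ∧
    (∀ p ∈ J, ∀ q ∈ J, p ≠ q → Disjoint (Finset.Icc p.1 p.2) (Finset.Icc q.1 q.2))

/-- The horizontal `r`-fold duplication `D^r P`. -/
inductive Dup (P : Type) [PartialOrder P] [BoundedOrder P] (r : ℕ) : Type where
  | bot : Dup P r
  | top : Dup P r
  | mid : {x : P // x ≠ ⊥ ∧ x ≠ ⊤} → Fin r → Dup P r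

namespace Dup

variable {P : Type} [PartialOrder P] [BoundedOrder P] {r : ℕ}

def le : Dup P r → Dup P r → Prop
  | .bot, _ => True
  | .mid _ _, .bot => False
  | .mid x i, .mid y j => (x = y ∧ i = j) ∨ (x : P) < (y : P)
  | .mid _ _, .top => True
  | .top, .top => True
  | .top, _ => False

instance : PartialOrder (Dup P r) where
  le := Dup.le
  le_refl a := by cases a with
    | bot => trivial
    | top => trivial
    | mid x i => exact Or.inl ⟨rfl, rfl⟩
  le_trans a b c hab hbc := by
    cases a with
    | bot => trivial
    | top =>
      cases b with
      | top =>
        cases c with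
        | top => trivial
        | bot => exact hbc.elim
        | mid _ _ => exact hbc.elim
      | bot => exact hab.elim
      | mid _ _ => exact hab.elim
    | mid x i =>
      cases b with
      | bot => exact hab.elim
      | top =>
        cases c with
        | top => trivial
        | bot => exact hbc.elim
        | mid _ _ => exact hbc.elim
      | mid y j =>
        cases c with
        | bot => exact hbc.elim
        | top => trivial
        | mid z l =>
          rcases hab with ⟨rfl, rfl⟩ | h1
          · exact hbc
          · rcases hbc with ⟨rfl, rfl⟩ | h2
            · exact Or.inr h1
            · exact Or.inr (h1.trans h2)
  le_antisymm a b hab hba := by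
    cases a with
    | bot =>
      cases b with
      | bot => rfl
      | top => exact hba.elim
      | mid _ _ => exact hba.elim
    | top =>
      cases b with
      | top => rfl
      | bot => exact hab.elim
      | mid _ _ => exact hab.elim
    | mid x i =>
      cases b with
      | bot => exact hab.elim
      | top => exact hba.elim
      | mid y j =>
        rcases hab with ⟨rfl, rfl⟩ | h1
        · rfl
        · rcases hba with ⟨rfl, rfl⟩ | h2
          · exact absurd h1 (lt_irrefl _)
          · exact absurd (h1.trans h2) (lt_irrefl _)

instance : BoundedOrder (Dup P r) where
  top := .top
  bot := .bot
  le_top a := by cases a <;> trivial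
  bot_le a := trivial

instance [Finite P] : Finite (Dup P r) :=
  Finite.of_injective
    (fun a : Dup P r =>
      (match a with
        | .bot => none
        | .top => some none
        | .mid x i => some (some (x, i)) :
        Option (Option ({x : P // x ≠ ⊥ ∧ x ≠ ⊤} × Fin r))))
    (by intro a b h; cases a <;> cases b <;> simp_all)

/-- The rank function of `D^r P`, where `P` has rank `n+1`. -/
def rank (ρ : P → ℕ) (n : ℕ) : Dup P r → ℕ
  | .bot => 0
  | .top => n + 1
  | .mid x _ => ρ x.val

/-- `a ∈ D^r P` is a copy of `x ∈ P`. -/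
def IsCopy (a : Dup P r) (x : P) : Prop :=
  (x = ⊥ ∧ a = .bot) ∨ (x = ⊤ ∧ a = .top) ∨ ∃ h i, a = .mid ⟨x, h⟩ i

end Dup

section Helpers

namespace Dup

variable {P : Type} [PartialOrder P] [BoundedOrder P] {r : ℕ}

@[simp] lemma bot_def : (⊥ : Dup P r) = .bot := rfl
@[simp] lemma top_def : (⊤ : Dup P r) = .top := rfl

/-- Underlying element of a copy. -/
def und : Dup P r → P
  | .bot => ⊥
  | .top => ⊤
  | .mid z _ => z.val

lemma isCopy_und (a : Dup P r) : IsCopy a (und a) := by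
  cases a with
  | bot => exact Or.inl ⟨rfl, rfl⟩
  | top => exact Or.inr (Or.inl ⟨rfl, rfl⟩)
  | mid z i => exact Or.inr (Or.inr ⟨z.2, i, by cases z; rfl⟩)

lemma und_eq {a : Dup P r} {x : P} (h : IsCopy a x) : und a = x := by
  rcases h with ⟨rfl, rfl⟩ | ⟨rfl, rfl⟩ | ⟨h, i, rfl⟩ <;> rfl

lemma und_le {a b : Dup P r} (h : a ≤ b) : und a ≤ und b := by
  cases a with
  | bot => exact bot_le
  | top =>
    cases b with
    | top => exact le_rfl
    | bot => exact h.elim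
    | mid _ _ => exact h.elim
  | mid x i =>
    cases b with
    | bot => exact h.elim
    | top => exact le_top
    | mid y j =>
      rcases h with ⟨rfl, rfl⟩ | h1
      · exact le_rfl
      · exact h1.le

lemma copy_eq {a b : Dup P r} {x : P} (hbt : (⊥ : P) ≠ ⊤)
    (ha : IsCopy a x) (hb : IsCopy b x) (hab : a ≤ b) : a = b := by
  rcases ha with ⟨rfl, rfl⟩ | ⟨hx, rfl⟩ | ⟨h, i, rfl⟩
  · rcases hb with ⟨_, rfl⟩ | ⟨hx, rfl⟩ | ⟨h, i, rfl⟩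
    · rfl
    · exact absurd hx hbt
    · exact absurd rfl h.1
  · rcases hb with ⟨hx', rfl⟩ | ⟨_, rfl⟩ | ⟨h, i, rfl⟩
    · exact absurd (hx'.symm.trans hx) hbt
    · rfl
    · exact absurd hx h.2
  · rcases hb with ⟨hx, rfl⟩ | ⟨hx, rfl⟩ | ⟨h', j, rfl⟩
    · exact absurd hx h.1
    · exact absurd hx h.2
    · rcases hab with ⟨he, rfl⟩ | h1
      · rfl
      · exact absurd h1 (lt_irrefl _)

lemma copy_le {a b : Dup P r} {x y : P}
    (ha : IsCopy a x) (hb : IsCopy b y) (hxy : x < y) : a ≤ b := by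
  rcases ha with ⟨rfl, rfl⟩ | ⟨rfl, rfl⟩ | ⟨h, i, rfl⟩
  · trivial
  · exact absurd (hxy.trans_le le_top) (lt_irrefl _)
  · rcases hb with ⟨rfl, rfl⟩ | ⟨rfl, rfl⟩ | ⟨h', j, rfl⟩
    · exact absurd (bot_le.trans_lt hxy) (by rw [lt_self_iff_false]; exact id)
    · trivial
    · exact Or.inr hxy

lemma lt_mid_iff {a : Dup P r} {x : P} (ha : IsCopy a x)
    (z : {w : P // w ≠ ⊥ ∧ w ≠ ⊤}) (l : Fin r) :
    a < .mid z l ↔ x < z.val := by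
  rcases ha with ⟨rfl, rfl⟩ | ⟨rfl, rfl⟩ | ⟨h, i, rfl⟩
  · constructor
    · intro _
      exact z.2.1.bot_lt
    · intro _
      exact lt_of_le_of_ne bot_le (fun h => by cases h)
  · constructor
    · intro hlt
      exact hlt.le.elim
    · intro hlt
      exact absurd (hlt.trans_le le_top) (lt_irrefl _)
  · constructor
    · intro hlt
      rcases hlt.le with ⟨he, rfl⟩ | h1
      · exact absurd (by rw [he]) hlt.ne
      · exact h1
    · intro hlt
      constructor
      · exact Or.inr hlt
      · intro hle
        rcases hle with ⟨he, rfl⟩ | h1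
        · exact absurd (congrArg Subtype.val he) hlt.ne'
        · exact absurd (hlt.trans h1) (lt_irrefl _)

lemma mid_lt_iff {b : Dup P r} {y : P} (hb : IsCopy b y)
    (z : {w : P // w ≠ ⊥ ∧ w ≠ ⊤}) (l : Fin r) :
    .mid z l < b ↔ z.val < y := by
  rcases hb with ⟨rfl, rfl⟩ | ⟨rfl, rfl⟩ | ⟨h, j, rfl⟩
  · constructor
    · intro hlt
      exact hlt.le.elim
    · intro hlt
      exact absurd hlt not_lt_bot
  · constructor
    · intro _
      exact z.2.2.lt_top
    · intro _
      exact lt_of_le_of_ne le_top (fun h => by cases h)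
  · constructor
    · intro hlt
      rcases hlt.le with ⟨he, rfl⟩ | h1
      · exact absurd (by rw [he]) hlt.ne
      · exact h1
    · intro hlt
      constructor
      · exact Or.inr hlt
      · intro hle
        rcases hle with ⟨he, rfl⟩ | h1
        · exact absurd (congrArg Subtype.val he) hlt.ne'
        · exact absurd (hlt.trans h1) (lt_irrefl _)

lemma rank_copy {a : Dup P r} {x : P} {ρ : P → ℕ} {n : ℕ}
    (hP : IsGraded P ρ n) (h : IsCopy a x) : rank ρ n a = ρ x := by
  rcases h with ⟨rfl, rfl⟩ | ⟨rfl, rfl⟩ | ⟨h, i, rfl⟩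
  · exact hP.1.symm
  · exact hP.2.1.symm
  · rfl

end Dup

end Helpers
open Dup in
lemma copy_muk {P : Type} [PartialOrder P] [BoundedOrder P] [Finite P]
    (hbt : (⊥ : P) ≠ ⊤) {ℓ : ℕ} (hℓ : 1 ≤ ℓ) (k : ℝ) (hk : k ≠ 0)
    (x y : P) (a b : Dup P ℓ) (ha : IsCopy a x) (hb : IsCopy b y) (hab : a ≤ b) :
    muk (k * ℓ) a b = muk k x y := by
  by_cases hxy : x = y
  · subst hxy
    rw [copy_eq hbt ha hb hab, muk, muk]
    simp
  · have hab' : a ≠ b := fun h => hxy (by rw [← und_eq ha, h, und_eq hb])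
    have hxle : x ≤ y := by rw [← und_eq ha, ← und_eq hb]; exact und_le hab
    rw [muk, if_neg hab', muk, if_neg hxy]
    have hℓ0 : (ℓ : ℝ) ≠ 0 := Nat.cast_ne_zero.mpr (by omega)
    have key :
        ∑ c ∈ (Finset.univ.filter fun c => a < c ∧ c < b).attach, muk (k * ℓ) a c.val
        = (ℓ : ℝ) * ∑ z ∈ (Finset.univ.filter fun z => x < z ∧ z < y).attach,
            muk k x z.val := by
      rw [Finset.sum_attach _ (fun c => muk (k * ℓ) a c)]
      have hbij :
          ∑ p ∈ (Finset.univ.filter fun z => x < z ∧ z < y).attach ×ˢ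
              (Finset.univ : Finset (Fin ℓ)), muk k x p.1.val
          = ∑ c ∈ (Finset.univ.filter fun c => a < c ∧ c < b), muk (k * ℓ) a c := by
        refine Finset.sum_bij
          (fun p _ => Dup.mid
            ⟨p.1.val,
              (bot_le.trans_lt (Finset.mem_filter.mp p.1.2).2.1).ne',
              ((Finset.mem_filter.mp p.1.2).2.2.trans_le le_top).ne⟩ p.2)
          ?_ ?_ ?_ ?_
        · intro p _
          rcases Finset.mem_filter.mp p.1.2 with ⟨-, hxz, hzy⟩
          exact Finset.mem_filter.mpr ⟨Finset.mem_univ _,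
            (lt_mid_iff ha _ _).mpr hxz, (mid_lt_iff hb _ _).mpr hzy⟩
        · intro p _ q _ h
          injection h with h1 h2
          have : p.1.val = q.1.val := by
            have := congrArg Subtype.val h1
            simpa using this
          exact Prod.ext (Subtype.ext this) h2
        · intro c hc
          rcases Finset.mem_filter.mp hc with ⟨-, hac, hcb⟩
          cases c with
          | bot => exact absurd hac (by simpa using (not_lt_bot (a := a)))
          | top => exact absurd hcb (by simpa using (not_top_lt (a := b)))
          | mid z l =>
            have hxz : x < z.val := (lt_mid_iff ha z l).mp hac
            have hzy : z.val < y := (mid_lt_iff hb z l).mp hcb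
            refine ⟨(⟨z.val, Finset.mem_filter.mpr ⟨Finset.mem_univ _, hxz, hzy⟩⟩, l),
              Finset.mem_product.mpr ⟨Finset.mem_attach _ _, Finset.mem_univ _⟩, ?_⟩
            cases z
            rfl
        · intro p _
          rcases Finset.mem_filter.mp p.1.2 with ⟨-, hxz, hzy⟩
          exact (copy_muk hbt hℓ k hk x p.1.val a _
            (ha) (Or.inr (Or.inr ⟨_, p.2, rfl⟩)) ((lt_mid_iff ha _ p.2).mpr hxz).le).symm
      rw [← hbij, Finset.sum_product]
      rw [Finset.sum_comm]
      simp [Finset.mul_sum, mul_comm]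
    rw [key]
    have hkl : (k * ℓ) ≠ 0 := mul_ne_zero hk hℓ0
    field_simp
termination_by (Finset.univ.filter fun w => w < y).card
decreasing_by
  have hzy : p.1.val < y := (Finset.mem_filter.mp p.1.2).2.2
  apply Finset.card_lt_card
  rw [Finset.ssubset_iff_of_subset]
  · exact ⟨p.1.val, Finset.mem_filter.mpr ⟨Finset.mem_univ _, hzy⟩,
      fun hc => absurd (Finset.mem_filter.mp hc).2 (lt_irrefl _)⟩
  · intro w hw
    exact Finset.mem_filter.mpr ⟨Finset.mem_univ _, (Finset.mem_filter.mp hw).2.trans hzy⟩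
/-- `P` is `k`-Eulerian iff `D^ℓ P` is `kℓ`-Eulerian. -/
theorem isKEulerian_dup_iff {P : Type} [PartialOrder P] [BoundedOrder P] [Finite P]
    (n ℓ : ℕ) (hℓ : 1 ≤ ℓ) (ρ : P → ℕ) (hP : IsGraded P ρ n) (k : ℝ) (hk : 0 < k) :
    IsKEulerian P ρ k ↔ IsKEulerian (Dup P ℓ) (Dup.rank ρ n) (k * ℓ) := by
  have hbt : (⊥ : P) ≠ ⊤ := by
    intro h
    have h1 := hP.1
    have h2 := hP.2.1
    rw [h, h2] at h1
    omega
  constructor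
  · intro hE a b hab
    rw [copy_muk hbt hℓ k hk.ne' (Dup.und a) (Dup.und b) a b (Dup.isCopy_und a)
        (Dup.isCopy_und b) hab,
      hE _ _ (Dup.und_le hab),
      Dup.rank_copy hP (Dup.isCopy_und a), Dup.rank_copy hP (Dup.isCopy_und b)]
  · intro hE x y hxy
    rcases eq_or_lt_of_le hxy with rfl | hlt
    · rw [muk]
      simp
    · classical
      by_cases hx : x = ⊥
      all_goals by_cases hy : y = ⊤
      all_goals {
        first
        | (have ha : Dup.IsCopy (Dup.bot : Dup P ℓ) x := Or.inl ⟨hx, rfl⟩)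
        | (have ha : Dup.IsCopy
            (Dup.mid ⟨x, hx, (hlt.trans_le le_top).ne⟩ ⟨0, hℓ⟩ : Dup P ℓ) x :=
            Or.inr (Or.inr ⟨_, _, rfl⟩))
        first
        | (have hb : Dup.IsCopy (Dup.top : Dup P ℓ) y := Or.inr (Or.inl ⟨hy, rfl⟩))
        | (have hb : Dup.IsCopy
            (Dup.mid ⟨y, (bot_le.trans_lt hlt).ne', hy⟩ ⟨0, hℓ⟩ : Dup P ℓ) y :=
            Or.inr (Or.inr ⟨_, _, rfl⟩))
        have hab := Dup.copy_le ha hb hlt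
        rw [← copy_muk hbt hℓ k hk.ne' x y _ _ ha hb hab, hE _ _ hab,
          Dup.rank_copy hP ha, Dup.rank_copy hP hb]
      }
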